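/- Let $\mathit{\Gamma}$ be a connected digraph, let $H$ be a group acting on $\mathit{\Gamma}$ by automorphisms, and suppose $\mathit{\Gamma}$ is $H$-arc-transitive. Let $v \to v_1$ be an arc of $\mathit{\Gamma}$ and let $h \in H$ be such that $v^h = v_1$. Then no nontrivial normal subgroup of $H_v$ is normalized by $h$; that is, if $N$ is a normal subgroup of $H_v$ with $h^{-1} N h = N$, then $N$ is the trivial subgroup. -/

import Mathlib

/-- `Γ` is `(H,s)`-arc-transitive: `H` is transitive on the set of `s`-arcs. -/
def ArcTrans (H : Type*) {V : Type*} [Group H] [MulAction H V]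
    (r : V → V → Prop) (s : ℕ) : Prop :=
  ∀ a b : Fin (s + 1) → V, (∀ i : Fin s, r (a i.castSucc) (a i.succ)) →
    (∀ i : Fin s, r (b i.castSucc) (b i.succ)) → ∃ h : H, ∀ i, h • a i = b i

/-- For a connected `H`-arc-transitive digraph with an arc `v → v₁` and `h ∈ H`
with `v^h = v₁`, no nontrivial normal subgroup of `H_v` is normalized by `h`. -/
theorem no_nontrivial_normal_subgroup_normalized {V H : Type*} [Fintype V]
    [Group H] [MulAction H V] [FaithfulSMul H V]
    (r : V → V → Prop) (hirr : Irreflexive r) (hanti : ∀ u w, r u w → ¬ r w u)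
    (hact : ∀ (h : H) (u w : V), r u w → r (h • u) (h • w))
    (hconn : (SimpleGraph.fromRel r).Connected)
    (hat : ArcTrans H r 1)
    (v v1 : V) (hvv1 : r v v1) (h : H) (hh : h • v = v1)
    (N : Subgroup H) (hNle : N ≤ MulAction.stabilizer H v)
    (hNnorm : (N.subgroupOf (MulAction.stabilizer H v)).Normal)
    (hNconj : ∀ g : H, g ∈ N ↔ h⁻¹ * g * h ∈ N) :
    N = ⊥ := by
  classical
  set K := Subgroup.normalizer (N : Set H) with hKdef
  -- the stabilizer of v is contained in the normalizer of N
  have hstab : MulAction.stabilizer H v ≤ K := by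
    intro g hg
    rw [Subgroup.mem_normalizer_iff]
    intro n
    constructor
    · intro hn
      have := hNnorm.conj_mem ⟨n, hNle hn⟩
        (by simpa [Subgroup.mem_subgroupOf] using hn) ⟨g, hg⟩
      simpa [Subgroup.mem_subgroupOf] using this
    · intro hn
      have := hNnorm.conj_mem ⟨g * n * g⁻¹, hNle hn⟩
        (by simpa [Subgroup.mem_subgroupOf] using hn) ⟨g, hg⟩⁻¹
      simpa [Subgroup.mem_subgroupOf, mul_assoc] using this
  -- h is in the normalizer of N
  have hhK : h ∈ K := by
    rw [Subgroup.mem_normalizer_iff]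
    intro n
    constructor
    · intro hn
      apply (hNconj (h * n * h⁻¹)).mpr
      have : h⁻¹ * (h * n * h⁻¹) * h = n := by group
      rwa [this]
    · intro hn
      have := (hNconj (h * n * h⁻¹)).mp hn
      have e : h⁻¹ * (h * n * h⁻¹) * h = n := by group
      rwa [e] at this
  -- arc-transitivity: for any arc (u, w) there is g with g•v = u, g•v1 = w
  have arc : ∀ u w : V, r u w → ∃ g : H, g • v = u ∧ g • v1 = w := by
    intro u w hruw
    obtain ⟨g, hg⟩ := hat ![v, v1] ![u, w]
      (by
        intro i
        fin_cases i
        simpa using hvv1)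
      (by
        intro i
        fin_cases i
        simpa using hruw)
    exact ⟨g, by simpa using hg 0, by simpa using hg 1⟩
  -- the normalizer is transitive on vertices, step along adjacency
  have step : ∀ a b : V, (SimpleGraph.fromRel r).Adj a b →
      (∃ k ∈ K, k • v = a) → ∃ k ∈ K, k • v = b := by
    rintro a b hadj ⟨k, hkK, hka⟩
    rw [SimpleGraph.fromRel_adj] at hadj
    obtain ⟨-, hr | hr⟩ := hadj
    · obtain ⟨g, hg1, hg2⟩ := arc a b hr
      have hs : k⁻¹ * g ∈ MulAction.stabilizer H v := by
        rw [MulAction.mem_stabilizer_iff, mul_smul, hg1, ← hka, inv_smul_smul]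
      have hgK : g ∈ K := by
        have := K.mul_mem hkK (hstab hs)
        simpa using this
      exact ⟨g * h, K.mul_mem hgK hhK, by rw [mul_smul, hh, hg2]⟩
    · obtain ⟨g, hg1, hg2⟩ := arc b a hr
      have hgh : (g * h) • v = a := by rw [mul_smul, hh, hg2]
      have hs : (g * h)⁻¹ * k ∈ MulAction.stabilizer H v := by
        rw [MulAction.mem_stabilizer_iff, mul_smul, hka, ← hgh, inv_smul_smul]
      have hghK : g * h ∈ K := by
        have := K.mul_mem hkK (K.inv_mem (hstab hs))
        simpa using this
      have hgK : g ∈ K := by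
        have := K.mul_mem hghK (K.inv_mem hhK)
        simpa using this
      exact ⟨g, hgK, hg1⟩
  -- connectivity: every vertex is in the K-orbit of v
  have cover : ∀ u : V, ∃ k ∈ K, k • v = u := by
    have walkstep : ∀ a b : V, (SimpleGraph.fromRel r).Walk a b →
        (∃ k ∈ K, k • v = a) → ∃ k ∈ K, k • v = b := by
      intro a b p
      induction p with
      | nil => exact fun hx => hx
      | cons hadj _ ih => exact fun hx => ih (step _ _ hadj hx)
    intro u
    obtain ⟨p⟩ := hconn.preconnected v u
    exact walkstep v u p ⟨1, K.one_mem, one_smul _ _⟩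
  -- N fixes every vertex
  have hfix : ∀ n ∈ N, ∀ u : V, n • u = u := by
    intro n hn u
    obtain ⟨k, hkK, hku⟩ := cover u
    have hk' : k⁻¹ * n * k ∈ N := by
      have := (Subgroup.mem_normalizer_iff.mp (K.inv_mem hkK) n).mp hn
      simpa using this
    have hfixv : (k⁻¹ * n * k) • v = v := hNle hk'
    calc n • u = n • (k • v) := by rw [hku]
      _ = k • ((k⁻¹ * n * k) • v) := by
          simp [mul_smul]
      _ = k • v := by rw [hfixv]
      _ = u := hku
  -- conclude by faithfulness
  rw [eq_bot_iff]
  intro n hn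
  have : n = (1 : H) := by
    apply eq_of_smul_eq_smul (α := V)
    intro u
    simp [hfix n hn u]
  exact Subgroup.mem_bot.mpr this
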